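/- arXiv:2205.14888 — 4 statements merged into one kernel-verified Lean document; each statement's English description precedes it below -/
import Mathlib

section
/- For integers s, k, n with 1 ≤ s ≤ k ≤ n−1 and n sufficiently large, the sum ∑_{i=s}^{k} 1/(i(n−i)+1) is at most (log k − log s + log(n−s+1) − log(n−k))/n + 3/n. -/
lemma harm_sum_le (a : ℕ) (ha : 1 ≤ a) : ∀ b : ℕ, a ≤ b →
    ∑ i ∈ Finset.Icc a b, (1:ℝ)/i ≤ Real.log b - Real.log a + 1/a := by
  intro b hb
  induction b, hb using Nat.le_induction with
  | base =>
    simp [Finset.Icc_self]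
  | succ b hb ih =>
    rw [Finset.sum_Icc_succ_top (by omega)]
    have hb0 : (0:ℝ) < b := by exact_mod_cast (by omega : 0 < b)
    have hb1 : (0:ℝ) < (b:ℝ) + 1 := by linarith
    have key : (1:ℝ)/((b:ℝ)+1) ≤ Real.log ((b:ℝ)+1) - Real.log b := by
      rw [← Real.log_div (by positivity) (by positivity)]
      have h := Real.log_le_sub_one_of_pos (x := (b:ℝ)/((b:ℝ)+1)) (by positivity)
      have : Real.log ((b:ℝ)/((b:ℝ)+1)) = - Real.log (((b:ℝ)+1)/b) := by
        rw [Real.log_div (by positivity) (by positivity),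
            Real.log_div (by positivity) (by positivity)]; ring
      rw [this] at h
      have : (b:ℝ)/((b:ℝ)+1) - 1 = -(1/((b:ℝ)+1)) := by field_simp; ring
      rw [this] at h
      linarith
    push_cast
    linarith

open Real in
/-- For integers `1 ≤ s ≤ k ≤ n-1` and `n` sufficiently large,
`∑_{i=s}^{k} 1/(i(n-i)+1) ≤ (log k - log s + log(n-s+1) - log(n-k))/n + 3/n`. -/
theorem sum_one_div_upper_bound :
    ∃ N : ℕ, ∀ n ≥ N, ∀ s k : ℕ, 1 ≤ s → s ≤ k → k ≤ n - 1 →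
      ∑ i ∈ Finset.Icc s k, (1 : ℝ) / (i * (n - i) + 1) ≤
        (Real.log k - Real.log s + Real.log (n - s + 1) - Real.log (n - k)) / n + 3 / n := by
  use 2
  intro n hn s k hs hsk hk
  have hn2 : 2 ≤ n := hn
  have hkn : k + 1 ≤ n := by omega
  have hnpos : (0:ℝ) < n := by exact_mod_cast (by omega : 0 < n)
  -- termwise bound
  have step : ∀ i ∈ Finset.Icc s k,
      (1:ℝ)/(i * ((n:ℝ) - i) + 1) ≤ (1/n) * (1/i + 1/((n:ℝ)-i)) := by
    intro i hi
    simp only [Finset.mem_Icc] at hi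
    have hi1 : (1:ℝ) ≤ i := by exact_mod_cast (by omega : 1 ≤ i)
    have hni : (1:ℝ) ≤ (n:ℝ) - i := by
      have : (i:ℝ) + 1 ≤ n := by exact_mod_cast (by omega : i + 1 ≤ n)
      linarith
    have hipos : (0:ℝ) < i := by linarith
    have hnipos : (0:ℝ) < (n:ℝ) - i := by linarith
    have heq : (1:ℝ)/n * (1/i + 1/((n:ℝ)-i)) = 1/((i:ℝ)*((n:ℝ)-i)) := by
      field_simp
      ring
    rw [heq]
    apply one_div_le_one_div_of_le (by nlinarith)
    linarith
  calc ∑ i ∈ Finset.Icc s k, (1 : ℝ) / (i * ((n:ℝ) - i) + 1)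
      ≤ ∑ i ∈ Finset.Icc s k, (1/(n:ℝ)) * (1/i + 1/((n:ℝ)-i)) := Finset.sum_le_sum step
    _ = (1/(n:ℝ)) * ((∑ i ∈ Finset.Icc s k, (1:ℝ)/i) + ∑ i ∈ Finset.Icc s k, (1:ℝ)/((n:ℝ)-i)) := by
        rw [← Finset.mul_sum, Finset.sum_add_distrib]
    _ ≤ (Real.log k - Real.log s + Real.log ((n:ℝ) - s + 1) - Real.log ((n:ℝ) - k)) / n + 3 / n := by
        have h1 : ∑ i ∈ Finset.Icc s k, (1:ℝ)/i ≤ Real.log k - Real.log s + 1/s :=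
          harm_sum_le s hs k hsk
        have reflect : ∑ i ∈ Finset.Icc s k, (1:ℝ)/((n:ℝ)-i)
            = ∑ j ∈ Finset.Icc (n-k) (n-s), (1:ℝ)/j := by
          refine Finset.sum_nbij' (fun i => n - i) (fun j => n - j) ?_ ?_ ?_ ?_ ?_
          · intro a ha; simp only [Finset.mem_Icc] at *; omega
          · intro a ha; simp only [Finset.mem_Icc] at *; omega
          · intro a ha; simp only [Finset.mem_Icc] at ha; omega
          · intro a ha; simp only [Finset.mem_Icc] at ha; omega
          · intro a ha
            simp only [Finset.mem_Icc] at ha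
            congr 1
            rw [Nat.cast_sub (by omega)]
        have h2 : ∑ j ∈ Finset.Icc (n-k) (n-s), (1:ℝ)/j
            ≤ Real.log (n-s : ℕ) - Real.log (n-k : ℕ) + 1/(n-k : ℕ) :=
          harm_sum_le (n-k) (by omega) (n-s) (by omega)
        have hcast1 : ((n - s : ℕ) : ℝ) = (n:ℝ) - s := by
          rw [Nat.cast_sub (by omega)]
        have hcast2 : ((n - k : ℕ) : ℝ) = (n:ℝ) - k := by
          rw [Nat.cast_sub (by omega)]
        rw [reflect]
        rw [hcast1, hcast2] at h2
        have hns : (1:ℝ) ≤ (n:ℝ) - s := by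
          have : (s:ℝ) + 1 ≤ n := by exact_mod_cast (by omega : s + 1 ≤ n)
          linarith
        have hnk : (1:ℝ) ≤ (n:ℝ) - k := by
          have : (k:ℝ) + 1 ≤ n := by exact_mod_cast (by omega : k + 1 ≤ n)
          linarith
        have hlog : Real.log ((n:ℝ) - s) ≤ Real.log ((n:ℝ) - s + 1) :=
          Real.log_le_log (by linarith) (by linarith)
        have hs1 : (1:ℝ)/s ≤ 1 := by
          rw [div_le_one (by exact_mod_cast hs)]
          exact_mod_cast hs
        have hnk1 : (1:ℝ)/((n:ℝ)-k) ≤ 1 := by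
          rw [div_le_one (by linarith)]; linarith
        have hsum : (∑ i ∈ Finset.Icc s k, (1:ℝ)/i) + ∑ j ∈ Finset.Icc (n-k) (n-s), (1:ℝ)/j
            ≤ Real.log k - Real.log s + Real.log ((n:ℝ)-s+1) - Real.log ((n:ℝ)-k) + 2 := by
          linarith
        calc (1/(n:ℝ)) * ((∑ i ∈ Finset.Icc s k, (1:ℝ)/i) + ∑ j ∈ Finset.Icc (n-k) (n-s), (1:ℝ)/j)
            ≤ (1/(n:ℝ)) * (Real.log k - Real.log s + Real.log ((n:ℝ)-s+1) - Real.log ((n:ℝ)-k) + 2) := by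
              apply mul_le_mul_of_nonneg_left hsum (by positivity)
          _ ≤ (Real.log k - Real.log s + Real.log ((n:ℝ) - s + 1) - Real.log ((n:ℝ) - k)) / n + 3 / n := by
              rw [← add_div, one_div, inv_mul_eq_div]
              gcongr
              linarith
end

section
/- For integers s, k, n with 1 ≤ s ≤ k ≤ n−1, the sum ∑_{i=s}^{k} 1/(i(n−i)+1) is at least (log k − log s + log(n−s+1) − log(n−k))/n − 3/n. -/
lemma tele_sum (f : ℕ → ℝ) (s : ℕ) : ∀ k, s ≤ k →
    ∑ i ∈ Finset.Icc s k, (f (i+1) - f i) = f (k+1) - f s := by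
  intro k
  induction k with
  | zero => intro h; interval_cases s; simp
  | succ k ih =>
    intro h
    rcases Nat.lt_or_ge s (k+1) with h1 | h1
    · rw [Finset.sum_Icc_succ_top h, ih (Nat.lt_succ_iff.mp h1)]; ring
    · have : s = k+1 := le_antisymm h h1
      subst this; simp

lemma log_add_one_sub_log_le (y : ℝ) (hy : 0 < y) : Real.log (y+1) - Real.log y ≤ 1/y := by
  rw [← Real.log_div (by positivity) (by positivity)]
  have h := Real.log_le_sub_one_of_pos (x := (y+1)/y) (by positivity)
  calc Real.log ((y+1)/y) ≤ (y+1)/y - 1 := h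
    _ = 1/y := by field_simp; ring

lemma per_term (x m : ℝ) (hx : 1 ≤ x) (hxm : x + 1 ≤ m) :
    (Real.log (x+2) - Real.log (x+1))/m + (Real.log (m-x+2) - Real.log (m-x+1))/m
      ≤ 1/(x*(m-x)+1) := by
  have hm : (2:ℝ) ≤ m := by linarith
  have h1 : (0:ℝ) < x + 1 := by linarith
  have h2 : (0:ℝ) < m - x + 1 := by linarith
  have hq : (0:ℝ) < x*(m-x)+1 := by nlinarith
  have hA := log_add_one_sub_log_le (x+1) h1
  have hB := log_add_one_sub_log_le (m-x+1) h2
  have e1 : x+1+1 = x+2 := by ring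
  have e2 : m-x+1+1 = m-x+2 := by ring
  rw [e1] at hA
  rw [e2] at hB
  have key : 1/(x+1)/m + 1/(m-x+1)/m ≤ 1/(x*(m-x)+1) := by
    rw [div_div, div_div, div_add_div _ _ (by positivity) (by positivity),
      div_le_div_iff₀ (by positivity) hq]
    nlinarith [sq_nonneg (m - 2*x)]
  calc (Real.log (x+2) - Real.log (x+1))/m + (Real.log (m-x+2) - Real.log (m-x+1))/m
      ≤ 1/(x+1)/m + 1/(m-x+1)/m := by
        gcongr
    _ ≤ 1/(x*(m-x)+1) := key

/-- For integers `1 ≤ s ≤ k ≤ n-1`,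
`∑_{i=s}^{k} 1/(i(n-i)+1) ≥ (log k - log s + log(n-s+1) - log(n-k))/n - 3/n`. -/
theorem sum_one_div_lower_bound (n s k : ℕ) (hs : 1 ≤ s) (hsk : s ≤ k) (hk : k ≤ n - 1) :
    (Real.log k - Real.log s + Real.log (n - s + 1) - Real.log (n - k)) / n - 3 / n ≤
      ∑ i ∈ Finset.Icc s k, (1 : ℝ) / (i * (n - i) + 1) := by
  have hn2 : 2 ≤ n := by omega
  have hk1 : k + 1 ≤ n := by omega
  have hnR : (2:ℝ) ≤ n := by exact_mod_cast hn2
  have hsR : (1:ℝ) ≤ s := by exact_mod_cast hs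
  have hskR : (s:ℝ) ≤ k := by exact_mod_cast hsk
  have hkR : (k:ℝ) + 1 ≤ n := by exact_mod_cast hk1
  set f : ℕ → ℝ := fun i => Real.log (i+1) with hf
  set g : ℕ → ℝ := fun i => -Real.log ((n:ℝ) - i + 2) with hg
  have step1 : ∑ i ∈ Finset.Icc s k, ((f (i+1) - f i)/n + (g (i+1) - g i)/n)
      ≤ ∑ i ∈ Finset.Icc s k, (1 : ℝ) / (i * (n - i) + 1) := by
    apply Finset.sum_le_sum
    intro i hi
    rw [Finset.mem_Icc] at hi
    have hxi : (1:ℝ) ≤ i := by exact_mod_cast hs.trans hi.1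
    have hxim : (i:ℝ) + 1 ≤ n := by
      have : i + 1 ≤ n := by omega
      exact_mod_cast this
    have := per_term i n hxi hxim
    simp only [hf, hg]
    push_cast
    convert this using 3
    · rfl
    · ring_nf
    · ring_nf
  have tf := tele_sum f s k hsk
  have tg := tele_sum g s k hsk
  have step2 : ∑ i ∈ Finset.Icc s k, ((f (i+1) - f i)/n + (g (i+1) - g i)/n)
      = (f (k+1) - f s + (g (k+1) - g s))/n := by
    have e : ∀ i : ℕ, (f (i+1) - f i)/(n:ℝ) + (g (i+1) - g i)/n
        = (f (i+1) - f i + (g (i+1) - g i))/n := fun i => by ring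
    simp_rw [e]
    rw [← Finset.sum_div, Finset.sum_add_distrib, tf, tg]
  have hfk : f (k+1) = Real.log ((k:ℝ)+2) := by simp only [hf]; push_cast; ring_nf
  have hfs : f s = Real.log ((s:ℝ)+1) := by simp [hf]
  have hgk : g (k+1) = -Real.log ((n:ℝ)-k+1) := by simp only [hg]; push_cast; ring_nf
  have hgs : g s = -Real.log ((n:ℝ)-s+2) := by simp [hg]
  -- final numerator inequality
  have l1 : Real.log k ≤ Real.log ((k:ℝ)+2) := by
    apply Real.log_le_log (by linarith [hsR.trans hskR]) (by linarith)
  have l2 : Real.log ((n:ℝ)-s+1) ≤ Real.log ((n:ℝ)-s+2) := by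
    apply Real.log_le_log (by linarith) (by linarith)
  have l3 : Real.log ((s:ℝ)+1) ≤ Real.log s + 1 := by
    have := log_add_one_sub_log_le s (by linarith)
    have h1s : 1/(s:ℝ) ≤ 1 := by
      rw [div_le_one (by linarith)]; exact hsR
    linarith
  have l4 : Real.log ((n:ℝ)-k+1) ≤ Real.log ((n:ℝ)-k) + 1 := by
    have hnk : (1:ℝ) ≤ (n:ℝ)-k := by linarith
    have := log_add_one_sub_log_le ((n:ℝ)-k) (by linarith)
    have h1s : 1/((n:ℝ)-k) ≤ 1 := by
      rw [div_le_one (by linarith)]; exact hnk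
    linarith
  have final : (Real.log k - Real.log s + Real.log ((n:ℝ) - s + 1) - Real.log ((n:ℝ) - k)) / n - 3 / n
      ≤ (f (k+1) - f s + (g (k+1) - g s))/n := by
    have hn0 : (0:ℝ) < n := by linarith
    rw [hfk, hfs, hgk, hgs, div_sub_div_same]
    gcongr
    linarith
  calc _ ≤ (f (k+1) - f s + (g (k+1) - g s))/n := final
    _ = _ := step2.symm
    _ ≤ _ := step1
end

section
/- In a simple temporal graph, the temporal subgraph output by the Foremost Forest algorithm on input (𝒢, S) is a foremost forest for S: for every vertex v in the output reachable from S, the unique temporal path from S to v in the output forest is a foremost (earliest-arrival) temporal (S,v)-path in 𝒢, and the vertex set of the output is exactly the set of vertices reachable from S in 𝒢. -/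
/-- A list of vertices is a temporal path if consecutive vertices are adjacent and
the labels of consecutive edges are strictly increasing. -/
def IsTPath {V : Type*} (adj : V → V → Prop) (lab : V → V → ℝ) (p : List V) : Prop :=
  p ≠ [] ∧ p.Chain' adj ∧
    ∀ i : ℕ, ∀ h : i + 2 < p.length,
      lab (p.get ⟨i, by omega⟩) (p.get ⟨i + 1, by omega⟩) <
        lab (p.get ⟨i + 1, by omega⟩) (p.get ⟨i + 2, by omega⟩)

/-- The arrival time of a temporal path (of length at least 2): the label of its
last edge (junk value `0` for shorter lists). -/
def arrivalTime {V : Type*} (lab : V → V → ℝ) (p : List V) : ℝ :=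
  match p.reverse with
  | a :: b :: _ => lab b a
  | _ => 0

/-- A vertex `v` is temporally reachable from the set `S` if `v ∈ S` or some
temporal path starts in `S` and ends at `v`. -/
def ReachesFrom {V : Type*} (adj : V → V → Prop) (lab : V → V → ℝ)
    (S : Finset V) (v : V) : Prop :=
  v ∈ S ∨ ∃ p : List V, ∃ hp : p ≠ [],
    IsTPath adj lab p ∧ 2 ≤ p.length ∧ p.head hp ∈ S ∧ p.getLast hp = v

section helpers
variable {V : Type*} {adj : V → V → Prop} {lab : V → V → ℝ}

lemma tpath_step {p : List V} (hp : IsTPath adj lab p) {i : ℕ} (h : i + 2 < p.length) :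
    lab (p[i]'(by omega)) (p[i+1]'(by omega)) < lab (p[i+1]'(by omega)) (p[i+2]'(by omega)) := by
  have := hp.2.2 i h
  simpa [List.get_eq_getElem] using this

lemma tpath_adj {p : List V} (hp : IsTPath adj lab p) {i : ℕ} (h : i + 1 < p.length) :
    adj (p[i]'(by omega)) (p[i+1]'(by omega)) := by
  have := List.isChain_iff_getElem.1 hp.2.1 i (by omega)
  simpa [List.get_eq_getElem] using this

lemma tpath_mono {p : List V} (hp : IsTPath adj lab p) {i j : ℕ} (hij : i ≤ j)
    (hj : j + 1 < p.length) :
    lab (p[i]'(by omega)) (p[i+1]'(by omega)) ≤ lab (p[j]'(by omega)) (p[j+1]'(by omega)) := by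
  induction j with
  | zero => interval_cases i; rfl
  | succ n ih =>
    rcases Nat.lt_or_ge i (n+1) with h | h
    · exact le_trans (ih (by omega) (by omega)) (le_of_lt (tpath_step hp (by omega)))
    · have : i = n + 1 := by omega
      subst this; rfl

lemma tpath_mono_strict {p : List V} (hp : IsTPath adj lab p) {i j : ℕ} (hij : i < j)
    (hj : j + 1 < p.length) :
    lab (p[i]'(by omega)) (p[i+1]'(by omega)) < lab (p[j]'(by omega)) (p[j+1]'(by omega)) := by
  obtain ⟨n, rfl⟩ : ∃ n, j = n + 1 := ⟨j - 1, by omega⟩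
  have h1 : lab (p[i]'(by omega)) (p[i+1]'(by omega)) ≤
      lab (p[n]'(by omega)) (p[n+1]'(by omega)) := tpath_mono hp (by omega) (by omega)
  exact lt_of_le_of_lt h1 (tpath_step hp (by omega))

lemma arrivalTime_eq {p : List V} (h : 2 ≤ p.length) :
    arrivalTime lab p = lab (p[p.length - 2]'(by omega)) (p[p.length - 1]'(by omega)) := by
  rcases hr : p.reverse with _ | ⟨a, _ | ⟨b, t⟩⟩
  · have : p.length = 0 := by simpa using congrArg List.length hr
    omega
  · have : p.length = 1 := by simpa using congrArg List.length hr
    omega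
  · have h0 : p.reverse[0]'(by rw [hr]; simp) = a := by simp [hr]
    have h1 : p.reverse[1]'(by rw [hr]; simp) = b := by simp [hr]
    rw [List.getElem_reverse] at h0 h1
    simp only [arrivalTime, hr]
    simp only [show p.length - 1 - 0 = p.length - 1 from by omega] at h0
    simp only [show p.length - 1 - 1 = p.length - 2 from by omega] at h1
    rw [h0, h1]

lemma arrivalTime_append (l : List V) (a b : V) :
    arrivalTime lab (l ++ [a, b]) = lab a b := by
  simp [arrivalTime, List.reverse_append]

end helpers

section helpers2
variable {V : Type*} {adj : V → V → Prop} {lab : V → V → ℝ}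

lemma isTPath_pair {a b : V} (h : adj a b) : IsTPath adj lab [a, b] := by
  refine ⟨by simp, by simp [List.Chain', h], ?_⟩
  intro i hi
  simp only [List.length_cons, List.length_nil] at hi
  omega

lemma arrivalTime_pair (a b : V) : arrivalTime lab [a, b] = lab a b := rfl

lemma arrivalTime_snoc {p : List V} (hne : p ≠ []) (v : V) :
    arrivalTime lab (p ++ [v]) = lab (p.getLast hne) v := by
  conv_lhs => rw [← List.dropLast_append_getLast hne, List.append_assoc]
  exact arrivalTime_append _ _ _

lemma isTPath_append {p : List V} (hp : IsTPath adj lab p) (h2 : 2 ≤ p.length) {v : V}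
    (hne : p ≠ []) (ha : adj (p.getLast hne) v)
    (hlt : arrivalTime lab p < lab (p.getLast hne) v) :
    IsTPath adj lab (p ++ [v]) := by
  refine ⟨by simp, ?_, ?_⟩
  · show List.IsChain adj (p ++ [v]); rw [List.isChain_append]
    refine ⟨hp.2.1, List.isChain_singleton v, ?_⟩
    intro x hx y hy
    rw [List.getLast?_eq_getLast hne] at hx
    simp only [Option.mem_some_iff, List.head?_cons] at hx hy
    rw [← hx, ← hy]; exact ha
  · intro i hi
    simp only [List.length_append, List.length_cons, List.length_nil] at hi
    simp only [List.get_eq_getElem]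
    rcases Nat.lt_or_ge (i + 2) p.length with h | h
    · rw [List.getElem_append_left (by omega), List.getElem_append_left (by omega),
        List.getElem_append_left (by omega)]
      exact tpath_step hp h
    · have hip : i + 2 = p.length := by omega
      rw [List.getElem_append_left (show i < p.length by omega),
        List.getElem_append_left (show i + 1 < p.length by omega),
        List.getElem_append_right (show p.length ≤ i + 2 by omega)]
      have hv : ([v][i + 2 - p.length]'(by simp; omega)) = v := by
        simp [show i + 2 - p.length = 0 from by omega]
      rw [hv]
      have hlast : p.getLast hne = p[i+1]'(by omega) := by
        rw [List.getLast_eq_getElem]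
        simp [show p.length - 1 = i + 1 from by omega]
      have harr : arrivalTime lab p = lab (p[i]'(by omega)) (p[i+1]'(by omega)) := by
        rw [arrivalTime_eq h2]
        simp [show p.length - 2 = i from by omega, show p.length - 1 = i + 1 from by omega]
      rw [hlast, harr] at hlt
      exact hlt

lemma isTPath_take {p : List V} (hp : IsTPath adj lab p) {m : ℕ} (hm : m < p.length) :
    IsTPath adj lab (p.take (m + 1)) := by
  have hlen : (p.take (m + 1)).length = m + 1 := by simp; omega
  refine ⟨by intro h; rw [h] at hlen; simp at hlen, hp.2.1.take _, ?_⟩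
  intro i hi
  rw [hlen] at hi
  simp only [List.get_eq_getElem, List.getElem_take]
  exact tpath_step hp (by omega)

lemma crossing (A : Set V) : ∀ (p : List V) (h0 : p ≠ []), p.head h0 ∈ A → p.getLast h0 ∉ A →
    ∃ m, ∃ hm : m + 1 < p.length, (p[m]'(by omega)) ∈ A ∧ (p[m+1]'hm) ∉ A := by
  intro p
  induction p with
  | nil => simp
  | cons a t ih =>
    intro h0 hh hl
    cases t with
    | nil => simp at hh hl; exact absurd hh hl
    | cons b t' =>
      by_cases hb : b ∈ A
      · obtain ⟨m, hm, h1, h2⟩ := ih (by simp) (by simpa using hb)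
          (by rwa [List.getLast_cons (by simp)] at hl)
        exact ⟨m + 1, by simpa using Nat.succ_lt_succ hm, by simpa using h1, by simpa using h2⟩
      · exact ⟨0, by simp, by simpa using hh, by simpa using hb⟩

end helpers2

/-- Correctness of the Foremost Forest algorithm: its output is a foremost forest
for `S`, i.e., every vertex added to the forest is reached from `S` by a temporal
path arriving exactly at the label of its forest edge, no temporal path from `S`
arrives at it strictly earlier, and the vertex set of the output forest is exactly
the set of vertices temporally reachable from `S`.

The run of the algorithm on a simple temporal graph `(adj, lab)` (symmetric
adjacency, symmetric labels that are distinct across edges) with source set `S`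
is encoded by the sequence `e : Fin k → V × V` of the edges it adds (as ordered
pairs, forest endpoint first), with `reached j` the vertex set of the forest
after `j` steps. The hypotheses state: each added edge extends the forest
(`hstep`), keeps the forest an increasing temporal forest (`hext`), has minimum
label among all such extension edges (`hmin`), and the algorithm stops only when
no extension edge remains (`hterm`). -/
theorem foremost_forest_correct
    {V : Type*} [Fintype V] [DecidableEq V]
    (adj : V → V → Prop) (hadj : Symmetric adj)
    (lab : V → V → ℝ) (hlab : ∀ u v, lab u v = lab v u)
    (hdistinct : ∀ u v x y, adj u v → adj x y → lab u v = lab x y →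
      (u = x ∧ v = y) ∨ (u = y ∧ v = x))
    (S : Finset V) (k : ℕ) (e : Fin k → V × V)
    (reached : ℕ → Set V)
    (hreached : ∀ j, reached j = ↑S ∪ {v | ∃ i : Fin k, (i : ℕ) < j ∧ (e i).2 = v})
    (hstep : ∀ i : Fin k,
      (e i).1 ∈ reached i ∧ (e i).2 ∉ reached i ∧ adj (e i).1 (e i).2)
    (hext : ∀ i : Fin k, (e i).1 ∈ S ∨ ∃ j : Fin k, (j : ℕ) < (i : ℕ) ∧
      (e j).2 = (e i).1 ∧ lab (e j).1 (e j).2 < lab (e i).1 (e i).2)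
    (hmin : ∀ i : Fin k, ∀ u v : V, u ∈ reached i → v ∉ reached i → adj u v →
      (u ∈ S ∨ ∃ j : Fin k, (j : ℕ) < (i : ℕ) ∧ (e j).2 = u ∧
        lab (e j).1 (e j).2 < lab u v) →
      lab (e i).1 (e i).2 ≤ lab u v)
    (hterm : ∀ u v : V, u ∈ reached k → v ∉ reached k → adj u v →
      ¬ (u ∈ S ∨ ∃ j : Fin k, (e j).2 = u ∧ lab (e j).1 (e j).2 < lab u v)) :
    (∀ i : Fin k,
      (∃ p : List V, ∃ hp : p ≠ [], IsTPath adj lab p ∧ 2 ≤ p.length ∧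
        p.head hp ∈ S ∧ p.getLast hp = (e i).2 ∧
        arrivalTime lab p = lab (e i).1 (e i).2) ∧
      (∀ p : List V, ∀ hp : p ≠ [], IsTPath adj lab p → 2 ≤ p.length →
        p.head hp ∈ S → p.getLast hp = (e i).2 →
        lab (e i).1 (e i).2 ≤ arrivalTime lab p)) ∧
    (∀ v : V, ReachesFrom adj lab S v ↔ v ∈ reached k) := by
  classical
  have hSsub : ∀ (j : ℕ) (w : V), w ∈ S → w ∈ reached j := by
    intro j w hw
    rw [hreached]
    exact Or.inl (by simpa using hw)
  have hmem : ∀ (w : V) (N : ℕ), w ∈ reached N ↔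
      w ∈ S ∨ ∃ j : Fin k, (j : ℕ) < N ∧ (e j).2 = w := by
    intro w N
    rw [hreached]
    simp [Set.mem_union]
  -- Existence of a temporal path realizing each forest edge.
  have key_ex : ∀ n : ℕ, ∀ i : Fin k, (i : ℕ) < n →
      ∃ p : List V, ∃ hp : p ≠ [], IsTPath adj lab p ∧ 2 ≤ p.length ∧
        p.head hp ∈ S ∧ p.getLast hp = (e i).2 ∧
        arrivalTime lab p = lab (e i).1 (e i).2 := by
    intro n
    induction n with
    | zero => intro i hi; omega
    | succ n ih =>
      intro i hi
      rcases Nat.lt_or_ge (i : ℕ) n with h | h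
      · exact ih i h
      · rcases hext i with hS | ⟨j, hj, hj2, hj3⟩
        · refine ⟨[(e i).1, (e i).2], by simp, isTPath_pair (hstep i).2.2, by simp, ?_, by simp,
            arrivalTime_pair _ _⟩
          simpa using hS
        · obtain ⟨p, hp, hT, hlen, hhead, hlast, harr⟩ := ih j (by omega)
          have hlast' : p.getLast hp = (e i).1 := by rw [hlast, hj2]
          have hadji : adj (p.getLast hp) (e i).2 := by rw [hlast']; exact (hstep i).2.2
          have hlt : arrivalTime lab p < lab (p.getLast hp) (e i).2 := by
            rw [harr, hlast']; exact hj3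
          refine ⟨p ++ [(e i).2], by simp, isTPath_append hT hlen hp hadji hlt, ?_, ?_, ?_, ?_⟩
          · simp; omega
          · rw [List.head_append_of_ne_nil]; exact hhead
          · simp [List.getLast_append]
          · rw [arrivalTime_snoc hp, hlast']
  have ex : ∀ i : Fin k, ∃ p : List V, ∃ hp : p ≠ [], IsTPath adj lab p ∧ 2 ≤ p.length ∧
      p.head hp ∈ S ∧ p.getLast hp = (e i).2 ∧
      arrivalTime lab p = lab (e i).1 (e i).2 :=
    fun i => key_ex ((i : ℕ) + 1) i (Nat.lt_succ_self _)
  -- Any first crossing edge of a temporal path from S out of `reached N` is a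
  -- valid extension edge, given optimality for all earlier steps.
  have cross_cond : ∀ (N : ℕ),
      (∀ j : Fin k, (j : ℕ) < N → ∀ q : List V, ∀ hq : q ≠ [], IsTPath adj lab q →
        2 ≤ q.length → q.head hq ∈ S → q.getLast hq ∉ reached j →
        lab (e j).1 (e j).2 ≤ arrivalTime lab q) →
      ∀ (p : List V) (hp : p ≠ []), IsTPath adj lab p → p.head hp ∈ S →
      ∀ m, ∀ hm : m + 1 < p.length, (p[m]'(by omega)) ∈ reached N →
      ((p[m]'(by omega)) ∈ S ∨ ∃ j : Fin k, (j : ℕ) < N ∧ (e j).2 = p[m]'(by omega) ∧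
        lab (e j).1 (e j).2 < lab (p[m]'(by omega)) (p[m+1]'hm)) := by
    intro N hopt p hp hT hhead m hm hin
    by_cases hus : (p[m]'(by omega)) ∈ S
    · exact Or.inl hus
    · right
      have hm0 : m ≠ 0 := by
        intro h
        subst h
        apply hus
        rw [← List.head_eq_getElem hp]
        exact hhead
      obtain ⟨m', rfl⟩ : ∃ m', m = m' + 1 := ⟨m - 1, by omega⟩
      obtain ⟨j, hjN, hj2⟩ := ((hmem _ N).1 hin).resolve_left hus
      refine ⟨j, hjN, hj2, ?_⟩
      have hqT : IsTPath adj lab (p.take (m' + 1 + 1)) := isTPath_take hT (by omega)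
      have hqne : p.take (m' + 1 + 1) ≠ [] := hqT.1
      have hqlen : (p.take (m' + 1 + 1)).length = m' + 2 := by simp; omega
      have hqlast : (p.take (m' + 1 + 1)).getLast hqne = p[m' + 1]'(by omega) := by
        rw [List.getLast_eq_getElem]
        simp [hqlen, List.getElem_take]
      have hqhead : (p.take (m' + 1 + 1)).head hqne ∈ S := by
        have h0 : (p.take (m' + 1 + 1)).head hqne = p[0]'(by omega) := by
          rw [List.head_eq_getElem]
          simp [List.getElem_take]
        rw [h0, ← List.head_eq_getElem hp]
        exact hhead
      have hqarr : arrivalTime lab (p.take (m' + 1 + 1)) =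
          lab (p[m']'(by omega)) (p[m' + 1]'(by omega)) := by
        rw [arrivalTime_eq (by omega)]
        simp [hqlen, List.getElem_take]
      have hqnot : (p.take (m' + 1 + 1)).getLast hqne ∉ reached j := by
        rw [hqlast, ← hj2]
        exact (hstep j).2.1
      have h1 := hopt j hjN _ hqne hqT (by omega) hqhead hqnot
      rw [hqarr] at h1
      exact lt_of_le_of_lt h1 (tpath_step hT (by omega))
  -- Optimality: forest edge labels lower-bound arrival times of temporal paths
  -- leaving the current forest.
  have key_opt : ∀ n : ℕ, ∀ i : Fin k, (i : ℕ) < n →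
      ∀ p : List V, ∀ hp : p ≠ [], IsTPath adj lab p → 2 ≤ p.length →
      p.head hp ∈ S → p.getLast hp ∉ reached i →
      lab (e i).1 (e i).2 ≤ arrivalTime lab p := by
    intro n
    induction n with
    | zero => intro i hi; omega
    | succ n ih =>
      intro i hi
      rcases Nat.lt_or_ge (i : ℕ) n with h | h
      · exact ih i h
      · intro p hp hT hlen hhead hlast
        have hin0 : p.head hp ∈ reached i := hSsub _ _ hhead
        rw [List.head_eq_getElem] at hin0
        obtain ⟨m, hm, hin, hout⟩ := crossing (reached i) p hp (by
          rw [List.head_eq_getElem]; exact hSsub _ _ (by rwa [← List.head_eq_getElem])) hlast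
        have hcond := cross_cond (i : ℕ) (fun j hj => ih j (by omega)) p hp hT hhead m hm hin
        have hlow := hmin i _ _ hin hout (tpath_adj hT hm) hcond
        obtain ⟨L, hL⟩ : ∃ L, p.length = L + 2 := ⟨p.length - 2, by omega⟩
        have harrp : arrivalTime lab p = lab (p[L]'(by omega)) (p[L+1]'(by omega)) := by
          rw [arrivalTime_eq hlen]
          simp [hL]
        have hmono : lab (p[m]'(by omega)) (p[m+1]'(by omega)) ≤
            lab (p[L]'(by omega)) (p[L+1]'(by omega)) := tpath_mono hT (by omega) (by omega)
        rw [harrp]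
        exact le_trans hlow hmono
  have opt : ∀ i : Fin k, ∀ p : List V, ∀ hp : p ≠ [], IsTPath adj lab p → 2 ≤ p.length →
      p.head hp ∈ S → p.getLast hp ∉ reached i →
      lab (e i).1 (e i).2 ≤ arrivalTime lab p :=
    fun i => key_opt ((i : ℕ) + 1) i (Nat.lt_succ_self _)
  refine ⟨fun i => ⟨ex i, ?_⟩, fun v => ⟨?_, ?_⟩⟩
  · intro p hp hT hlen hhead hlast
    exact opt i p hp hT hlen hhead (by rw [hlast]; exact (hstep i).2.1)
  · -- ReachesFrom → reached k
    intro hv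
    rcases hv with hvS | ⟨p, hp, hT, hlen, hhead, hlast⟩
    · exact hSsub k v hvS
    · by_contra hvk
      obtain ⟨m, hm, hin, hout⟩ := crossing (reached k) p hp (by
        rw [List.head_eq_getElem]; exact hSsub _ _ (by rwa [← List.head_eq_getElem])) (by
        rwa [hlast])
      have hcond := cross_cond k (fun j _ => opt j) p hp hT hhead m hm hin
      refine hterm _ _ hin hout (tpath_adj hT hm) ?_
      rcases hcond with h | ⟨j, _, hj2, hj3⟩
      · exact Or.inl h
      · exact Or.inr ⟨j, hj2, hj3⟩
  · -- reached k → ReachesFrom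
    intro hv
    rcases (hmem v k).1 hv with hvS | ⟨i, _, hi2⟩
    · exact Or.inl hvS
    · obtain ⟨p, hp, hT, hlen, hhead, hlast, -⟩ := ex i
      exact Or.inr ⟨p, hp, hT, hlen, hhead, by rw [hlast, hi2]⟩
end

section
/- In the Foremost Forest algorithm run on a simple temporal graph with source set S, the time labels of the edges added by the algorithm are non-decreasing in the order in which they are added: λ(e_{|S|}) ≤ λ(e_{|S|+1}) ≤ ⋯ ≤ λ(e_k). -/
/-- In the Foremost Forest algorithm, the time labels of the edges added by the
algorithm are non-decreasing in the order in which they are added.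

The run of the algorithm on a simple temporal graph `(adj, lab)` (symmetric
adjacency, symmetric labels that are distinct across edges) with source set `S`
is encoded by the sequence `e : Fin k → V × V` of the edges it adds (as ordered
pairs, forest endpoint first), with `reached j` the vertex set of the forest
after `j` steps. The hypotheses state: each added edge extends the forest
(`hstep`), keeps the forest an increasing temporal forest (`hext`), and has
minimum label among all such extension edges (`hmin`). -/
theorem foremost_forest_labels_monotone
    {V : Type*} [Fintype V] [DecidableEq V]
    (adj : V → V → Prop) (hadj : Symmetric adj)
    (lab : V → V → ℝ) (hlab : ∀ u v, lab u v = lab v u)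
    (hdistinct : ∀ u v x y, adj u v → adj x y → lab u v = lab x y →
      (u = x ∧ v = y) ∨ (u = y ∧ v = x))
    (S : Finset V) (k : ℕ) (e : Fin k → V × V)
    (reached : ℕ → Set V)
    (hreached : ∀ j, reached j = ↑S ∪ {v | ∃ i : Fin k, (i : ℕ) < j ∧ (e i).2 = v})
    (hstep : ∀ i : Fin k,
      (e i).1 ∈ reached i ∧ (e i).2 ∉ reached i ∧ adj (e i).1 (e i).2)
    (hext : ∀ i : Fin k, (e i).1 ∈ S ∨ ∃ j : Fin k, (j : ℕ) < (i : ℕ) ∧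
      (e j).2 = (e i).1 ∧ lab (e j).1 (e j).2 < lab (e i).1 (e i).2)
    (hmin : ∀ i : Fin k, ∀ u v : V, u ∈ reached i → v ∉ reached i → adj u v →
      (u ∈ S ∨ ∃ j : Fin k, (j : ℕ) < (i : ℕ) ∧ (e j).2 = u ∧
        lab (e j).1 (e j).2 < lab u v) →
      lab (e i).1 (e i).2 ≤ lab u v) :
    ∀ i j : Fin k, i ≤ j → lab (e i).1 (e i).2 ≤ lab (e j).1 (e j).2 := by

  have hmono : ∀ a b : ℕ, a ≤ b → reached a ⊆ reached b := by
    intro a b hab x hx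
    rw [hreached] at hx ⊢
    rcases hx with h | ⟨i, hi, hv⟩
    · exact Or.inl h
    · exact Or.inr ⟨i, lt_of_lt_of_le hi hab, hv⟩
  have step : ∀ j j2 : Fin k, (j2 : ℕ) = (j : ℕ) + 1 →
      lab (e j).1 (e j).2 ≤ lab (e j2).1 (e j2).2 := by
    intro j j2 hj2
    obtain ⟨hu, hv, hadj'⟩ := hstep j2
    have hvj : (e j2).2 ∉ reached (j : ℕ) := fun h => hv (hmono _ _ (by omega) h)
    rcases hext j2 with hS | ⟨j', hj', h2, hlt⟩
    · have huj : (e j2).1 ∈ reached (j : ℕ) := by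
        rw [hreached]; exact Or.inl hS
      exact hmin j _ _ huj hvj hadj' (Or.inl hS)
    · rcases eq_or_lt_of_le (show (j' : ℕ) ≤ (j : ℕ) by omega) with heq | hltj
      · have : j' = j := Fin.ext heq
        subst this
        exact le_of_lt hlt
      · have huj : (e j2).1 ∈ reached (j : ℕ) := by
          rw [hreached]; exact Or.inr ⟨j', hltj, h2⟩
        exact hmin j _ _ huj hvj hadj' (Or.inr ⟨j', hltj, h2, hlt⟩)
  intro i j hij
  obtain ⟨n, hn⟩ : ∃ n, (j : ℕ) = (i : ℕ) + n := ⟨(j : ℕ) - (i : ℕ), by omega⟩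
  clear hij
  induction n generalizing j with
  | zero => have : i = j := Fin.ext (by omega); rw [this]
  | succ n ih =>
    have hlt : (i : ℕ) + n < k := by omega
    have h1 := ih ⟨(i : ℕ) + n, hlt⟩ rfl
    have h2 := step ⟨(i : ℕ) + n, hlt⟩ j (by simpa [Nat.add_assoc] using hn)
    exact le_trans h1 h2
end
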